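/- Let n ≥ 1 and let J³ : Λ³(gl(n,ℝ)) → (ℝⁿ → Λ³(ℝⁿ)) be the linear map determined by J³(A ∧ B ∧ C)(x) = (Aᵀx) ∧ (Bᵀx) ∧ (Cᵀx) for A, B, C ∈ gl(n,ℝ) and x ∈ ℝⁿ. Then the kernel of J³ has dimension n²(n²−1)(5n²−8)/36. -/

import Mathlib

open ExteriorAlgebra
open scoped Matrix

/-- Any injective map `Fin 3 → Fin N` factors as a strictly monotone map
composed with a permutation. -/
lemma aux_sort_factor {N : ℕ} {d : Fin 3 → Fin N} (hd : Function.Injective d) :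
    ∃ (s : {s : Fin 3 → Fin N // StrictMono s}) (σ : Equiv.Perm (Fin 3)),
      d = s.1 ∘ σ := by
  classical
  set t : Finset (Fin N) := Finset.univ.image d with ht
  have htc : t.card = 3 := by
    rw [ht, Finset.card_image_of_injective _ hd, Finset.card_univ, Fintype.card_fin]
  set s0 : Fin 3 → Fin N := ⇑(t.orderEmbOfFin htc) with hs0
  have hs0mono : StrictMono s0 := (t.orderEmbOfFin htc).strictMono
  have hmem : ∀ i, d i ∈ t := fun i => Finset.mem_image_of_mem d (Finset.mem_univ i)
  have hrange : Set.range s0 = ↑t := Finset.range_orderEmbOfFin t htc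
  -- define σ i as the preimage of d i under s0
  have hex : ∀ i, ∃ j, s0 j = d i := by
    intro i
    have : (d i : Fin N) ∈ Set.range s0 := by rw [hrange]; exact_mod_cast hmem i
    exact this
  choose σf hσf using hex
  have hσinj : Function.Injective σf := by
    intro a b hab
    apply hd
    rw [← hσf a, ← hσf b, hab]
  obtain ⟨σ, hσ⟩ : ∃ σ : Equiv.Perm (Fin 3), ⇑σ = σf :=
    ⟨Equiv.ofBijective σf (Finite.injective_iff_bijective.mp hσinj), rfl⟩
  exact ⟨⟨s0, hs0mono⟩, σ, by funext i; simp [Function.comp, hσ, hσf i]⟩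

section basis3
variable {N : ℕ} {V : Type*} [AddCommGroup V] [Module ℝ V] (b : Module.Basis (Fin N) ℝ V)

/-- The wedge products of triples of basis vectors with strictly increasing indices
are linearly independent in the exterior algebra. -/
lemma aux_indep3 :
    LinearIndependent ℝ (fun s : {s : Fin 3 → Fin N // StrictMono s} =>
      ιMulti ℝ 3 (b ∘ s.1)) := by
  classical
  rw [Fintype.linearIndependent_iff]
  intro c hc t
  -- the detecting functional
  set g : V [⋀^Fin 3]→ₗ[ℝ] ℝ :=
    (Matrix.detRowAlternating (R := ℝ) (n := Fin 3)).compLinearMap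
      (LinearMap.pi fun j => b.coord (t.1 j)) with hg
  set φ : ExteriorAlgebra ℝ V →ₗ[ℝ] ℝ :=
    liftAlternating (Function.update (fun i => (0 : V [⋀^Fin i]→ₗ[ℝ] ℝ)) 3 g) with hφ
  have key : ∀ s : {s : Fin 3 → Fin N // StrictMono s},
      φ (ιMulti ℝ 3 (b ∘ s.1)) = if s = t then 1 else 0 := by
    intro s
    rw [hφ, liftAlternating_apply_ιMulti, Function.update_self]
    have hmat : ∀ i j, (b.coord (t.1 j)) ((b ∘ s.1) i) = if s.1 i = t.1 j then 1 else 0 := by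
      intro i j
      simp only [Function.comp_apply, Module.Basis.coord_apply, Module.Basis.repr_self]
      rw [Finsupp.single_apply]
    by_cases hst : s = t
    · subst hst
      rw [if_pos rfl]
      have : (fun i => (LinearMap.pi fun j => b.coord (s.1 j)) ((b ∘ s.1) i))
          = (1 : Matrix (Fin 3) (Fin 3) ℝ) := by
        funext i j
        simp only [LinearMap.pi_apply]
        rw [hmat i j, Matrix.one_apply]
        simp [s.2.injective.eq_iff, eq_comm]
      simp only [AlternatingMap.compLinearMap_apply, hg]
      erw [this]
      exact Matrix.det_one
    · rw [if_neg hst]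
      -- ranges differ, so some row is zero
      have hne : Set.range s.1 ≠ Set.range t.1 := by
        intro h
        exact hst (Subtype.ext ((StrictMono.range_inj s.2 t.2).mp h))
      have : ∃ i, ∀ j, s.1 i ≠ t.1 j := by
        by_contra h
        push_neg at h
        apply hne
        have hsub : Set.range s.1 ⊆ Set.range t.1 := by
          rintro _ ⟨i, rfl⟩
          obtain ⟨j, hj⟩ := h i
          exact ⟨j, hj.symm⟩
        -- equal cards force equality
        have h1 : (Set.range s.1).toFinset ⊆ (Set.range t.1).toFinset := by
          intro x hx
          rw [Set.mem_toFinset] at *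
          exact hsub hx
        have hcs : (Set.range s.1).toFinset.card = 3 := by
          rw [Set.toFinset_range, Finset.card_image_of_injective _ s.2.injective]
          simp
        have hct : (Set.range t.1).toFinset.card = 3 := by
          rw [Set.toFinset_range, Finset.card_image_of_injective _ t.2.injective]
          simp
        have := Finset.eq_of_subset_of_card_le h1 (by rw [hcs, hct])
        rw [← Set.toFinset_inj] at *
        exact (by rw [this] : (Set.range s.1).toFinset = (Set.range t.1).toFinset) ▸ rfl
      obtain ⟨i, hi⟩ := this
      simp only [AlternatingMap.compLinearMap_apply, hg]
      show Matrix.det (Matrix.of fun i j => _) = 0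
      apply Matrix.det_eq_zero_of_row_eq_zero i
      intro j
      show (LinearMap.pi fun j => b.coord (t.1 j)) ((b ∘ s.1) i) j = 0
      simp only [LinearMap.pi_apply]
      rw [hmat i j, if_neg (hi j)]
  have := congrArg φ hc
  rw [map_sum, map_zero] at this
  simp only [map_smul, key, smul_eq_mul, mul_ite, mul_one, mul_zero] at this
  rw [Finset.sum_ite_eq' Finset.univ t (fun s => c s)] at this
  simpa using this

/-- The wedge products of strictly increasing triples of basis vectors span `⋀³V`. -/
lemma aux_span3 :
    Submodule.span ℝ (Set.range fun s : {s : Fin 3 → Fin N // StrictMono s} =>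
      ιMulti ℝ 3 (b ∘ s.1)) = ⋀[ℝ]^3 V := by
  classical
  apply le_antisymm
  · rw [Submodule.span_le]
    rintro _ ⟨s, rfl⟩
    exact ιMulti_range ℝ 3 (Set.mem_range_self _)
  · rw [← ιMulti_span_fixedDegree ℝ 3, Submodule.span_le]
    rintro _ ⟨v, rfl⟩
    have hv : v = fun i => ∑ j, b.repr (v i) j • b j := by
      funext i; exact (b.sum_repr (v i)).symm
    rw [hv]
    rw [show ((ιMulti ℝ 3) fun i => ∑ j, b.repr (v i) j • b j)
        = ∑ d : Fin 3 → Fin N, (ιMulti ℝ 3) fun i => b.repr (v i) (d i) • b (d i) from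
      (ιMulti ℝ 3).toMultilinearMap.map_sum (fun i j => b.repr (v i) j • b j)]
    apply Submodule.sum_mem
    intro d _
    rw [show ((ιMulti ℝ 3) fun i => b.repr (v i) (d i) • b (d i))
        = (∏ i, b.repr (v i) (d i)) • (ιMulti ℝ 3) (b ∘ d) from
      (ιMulti ℝ 3).toMultilinearMap.map_smul_univ _ _]
    apply Submodule.smul_mem
    by_cases hd : Function.Injective d
    · obtain ⟨s, σ, rfl⟩ := aux_sort_factor hd
      have : (⇑b ∘ (s.1 ∘ ⇑σ)) = (⇑b ∘ s.1) ∘ ⇑σ := rfl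
      rw [this, AlternatingMap.map_perm (ιMulti ℝ 3) (⇑b ∘ s.1) σ, Units.smul_def]
      refine zsmul_mem ?_ _
      exact Submodule.subset_span ⟨s, rfl⟩
    · rw [Function.not_injective_iff] at hd
      obtain ⟨i, j, hij, hne⟩ := hd
      rw [AlternatingMap.map_eq_zero_of_eq (ιMulti ℝ 3) (⇑b ∘ d)
        (by simp [Function.comp, hij]) hne]
      exact Submodule.zero_mem _

lemma aux_card_strictMono (N : ℕ) :
    Fintype.card {s : Fin 3 → Fin N // StrictMono s} = N.choose 3 := by
  classical
  have e : {s : Fin 3 → Fin N // StrictMono s} ≃ {t : Finset (Fin N) // t.card = 3} := by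
    refine
      { toFun := fun s => ⟨Finset.univ.image s.1, by
          rw [Finset.card_image_of_injective _ s.2.injective, Finset.card_univ,
            Fintype.card_fin]⟩
        invFun := fun t => ⟨⇑(t.1.orderEmbOfFin t.2), (t.1.orderEmbOfFin t.2).strictMono⟩
        left_inv := ?_, right_inv := ?_ }
    · intro s
      apply Subtype.ext
      exact (Finset.orderEmbOfFin_unique _
        (fun i => Finset.mem_image_of_mem _ (Finset.mem_univ i)) s.2).symm
    · intro t
      apply Subtype.ext
      apply Finset.coe_injective
      simp [Set.image_univ, Finset.range_orderEmbOfFin]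
  rw [Fintype.card_congr e, Fintype.card_finset_len, Fintype.card_fin]

end basis3

/-- If `f i` are independent scalar functions and `v k` independent vectors, then the
functions `x ↦ f i x • v k` are independent. -/
lemma aux_prod_indep {X : Type*} {W : Type*} [AddCommGroup W] [Module ℝ W]
    {ι κ : Type*} [Fintype ι] [Fintype κ] {f : ι → X → ℝ} {v : κ → W}
    (hf : LinearIndependent ℝ f) (hv : LinearIndependent ℝ v) :
    LinearIndependent ℝ (fun p : ι × κ => (fun x => f p.1 x • v p.2)) := by
  classical
  rw [Fintype.linearIndependent_iff] at hf hv ⊢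
  intro c hc p
  have hx : ∀ x : X, ∑ k : κ, (∑ i : ι, c (i, k) * f i x) • v k = 0 := by
    intro x
    have := congrFun hc x
    simp only [Finset.sum_apply, Pi.smul_apply, Pi.zero_apply, smul_smul] at this
    rw [← this, ← Finset.univ_product_univ, Finset.sum_product]
    rw [Finset.sum_comm]
    apply Finset.sum_congr rfl
    intros k _
    rw [Finset.sum_smul]
  have hk : ∀ (k : κ) (x : X), ∑ i : ι, c (i, k) * f i x = 0 := by
    intro k x
    exact hv (fun k => ∑ i : ι, c (i, k) * f i x) (hx x) k
  have : ∀ i : ι, c (i, p.2) = 0 := by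
    apply hf
    funext x
    simp only [Finset.sum_apply, Pi.smul_apply, Pi.zero_apply, smul_eq_mul]
    exact hk p.2 x
  exact this p.1

open MvPolynomial in
/-- The degree-3 monomial functions `ℝⁿ → ℝ` are linearly independent. -/
lemma aux_monomial_indep (n : ℕ) :
    LinearIndependent ℝ (fun m : Sym (Fin n) 3 =>
      (fun x : Fin n → ℝ => eval x (monomial (Multiset.toFinsupp m.1) (1 : ℝ)))) := by
  classical
  set L : MvPolynomial (Fin n) ℝ →ₗ[ℝ] ((Fin n → ℝ) → ℝ) :=
    { toFun := fun p x => eval x p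
      map_add' := by intros; funext x; simp
      map_smul' := by intros; funext x; simp [smul_eq_C_mul] } with hL
  have hker : LinearMap.ker L = ⊥ := by
    rw [LinearMap.ker_eq_bot']
    intro p hp
    apply MvPolynomial.funext (q := 0)
    intro x
    have := congrFun hp x
    simp only [map_zero]
    exact this
  have hinj : Function.Injective (fun m : Sym (Fin n) 3 => Multiset.toFinsupp m.1) := by
    intro a b hab
    exact Subtype.ext (Multiset.toFinsupp.injective hab)
  have h1 : LinearIndependent ℝ (fun m : Sym (Fin n) 3 =>
      (monomial (Multiset.toFinsupp m.1) (1 : ℝ))) := by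
    have := ((basisMonomials (Fin n) ℝ).linearIndependent).comp _ hinj
    simpa [coe_basisMonomials, Function.comp_def] using this
  have := h1.map' L hker
  exact this

/-- 6 times the binomial coefficient `choose k 3`. -/
lemma aux_choose3 (k : ℕ) : k.choose 3 * 6 = k * (k - 1) * (k - 2) := by
  have h := Nat.descFactorial_eq_factorial_mul_choose k 3
  have h2 : k.descFactorial 3 = (k - 2) * ((k - 1) * k) := by
    simp [Nat.descFactorial_succ, Nat.descFactorial_zero]
  have h3 : Nat.factorial 3 = 6 := rfl
  rw [h2, h3] at h
  rw [Nat.mul_comm (k.choose 3) 6, ← h]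
  ring
  
lemma aux_arith (n : ℕ) (hn : 1 ≤ n) (K : ℕ)
    (h : K + (n + 2).choose 3 * n.choose 3 = (n * n).choose 3) :
    K = n ^ 2 * (n ^ 2 - 1) * (5 * n ^ 2 - 8) / 36 := by
  have key : K * 36 = n ^ 2 * (n ^ 2 - 1) * (5 * n ^ 2 - 8) := by
    have h36 : K * 36 + ((n + 2).choose 3 * 6) * (n.choose 3 * 6) = ((n * n).choose 3 * 6) * 6 := by
      have h1 : (n + 2).choose 3 * 6 * (n.choose 3 * 6) = (n + 2).choose 3 * n.choose 3 * 36 := by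
        ring
      have h2 : (n * n).choose 3 * 6 * 6 = (n * n).choose 3 * 36 := by ring
      rw [h1, h2, ← Nat.add_mul, h]
    rw [aux_choose3, aux_choose3, aux_choose3] at h36
    -- now pure arithmetic, n ≥ 1
    obtain ⟨m, rfl⟩ : ∃ m, n = m + 1 := ⟨n - 1, by omega⟩
    rcases m with _ | m
    · simpa using h36
    · -- n = m + 2
      set q := m + 2 with hq
      have e1 : q + 2 - 1 = q + 1 := by omega
      have e2 : q + 2 - 2 = q := by omega
      have e3 : q - 1 = m + 1 := by omega
      have e4 : q - 2 = m := by omega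
      have e5 : q * q - 1 = m * m + 4 * m + 3 := by
        have : q * q = m * m + 4 * m + 4 := by rw [hq]; ring
        omega
      have e6 : q * q - 2 = m * m + 4 * m + 2 := by
        have : q * q = m * m + 4 * m + 4 := by rw [hq]; ring
        omega
      have e7 : q ^ 2 - 1 = m * m + 4 * m + 3 := by
        have : q ^ 2 = m * m + 4 * m + 4 := by rw [hq]; ring
        omega
      have e8 : 5 * q ^ 2 - 8 = 5 * (m * m) + 20 * m + 12 := by
        have : q ^ 2 = m * m + 4 * m + 4 := by rw [hq]; ring
        omega
      rw [e1, e2, e3, e4, e5, e6] at h36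
      rw [e7, e8]
      have hqm : q = m + 2 := hq
      rw [hqm] at h36 ⊢
      ring_nf at h36 ⊢
      linarith [h36]
  have h36pos : (0:ℕ) < 36 := by norm_num
  omega

open MvPolynomial in
lemma aux_eval_monomial {n : ℕ} (x : Fin n → ℝ) (a b c : Fin n) :
    eval x (monomial (Multiset.toFinsupp ({a, b, c} : Multiset (Fin n))) (1 : ℝ))
      = x a * x b * x c := by
  classical
  have h : ({a, b, c} : Multiset (Fin n)) = {a} + ({b} + {c}) := by
    rw [Multiset.singleton_add, Multiset.singleton_add]
    rfl
  rw [h, Multiset.toFinsupp_add, Multiset.toFinsupp_add, Multiset.toFinsupp_singleton,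
    Multiset.toFinsupp_singleton, Multiset.toFinsupp_singleton]
  rw [monomial_single_add, monomial_single_add]
  have : (monomial (Finsupp.single c 1)) (1 : ℝ) = X c := rfl
  rw [this]
  simp [mul_assoc]

lemma aux_stdBasisMatrix_mulVec {n : ℕ} (a j : Fin n) (x : Fin n → ℝ) :
    (Matrix.single a j (1 : ℝ))ᵀ *ᵥ x = x a • (Pi.basisFun ℝ (Fin n)) j := by
  classical
  funext k
  simp only [Matrix.mulVec, dotProduct, Matrix.transpose_apply, Matrix.single,
    Pi.smul_apply, Pi.basisFun_apply]
  rw [Finset.sum_eq_single a]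
  · by_cases hk : j = k <;> simp [hk, Pi.single_apply, eq_comm]
  · intro r _ hr
    simp [Ne.symm hr]
  · simp

/-- The generating family for the image of `J³`: monomial times wedge of
coordinate vectors. -/
noncomputable def auxG (n : ℕ) :
    (Sym (Fin n) 3 × {s : Fin 3 → Fin n // StrictMono s}) →
      ((Fin n → ℝ) → ExteriorAlgebra ℝ (Fin n → ℝ)) :=
  fun p => fun x =>
    (MvPolynomial.eval x) ((MvPolynomial.monomial (Multiset.toFinsupp p.1.1)) (1 : ℝ)) •
      ExteriorAlgebra.ιMulti ℝ 3 (⇑(Pi.basisFun ℝ (Fin n)) ∘ p.2.1)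

lemma auxG_indep (n : ℕ) : LinearIndependent ℝ (auxG n) := by
  have h := aux_prod_indep (aux_monomial_indep n) (aux_indep3 (Pi.basisFun ℝ (Fin n)))
  unfold auxG
  convert h using 1

open MvPolynomial in
/-- Every polynomial in the span of degree-3 monomials gives a function in the span of
the generators. -/
lemma aux_poly_smul_mem {n : ℕ} (s : {s : Fin 3 → Fin n // StrictMono s})
    {p : MvPolynomial (Fin n) ℝ}
    (hp : p ∈ Submodule.span ℝ (Set.range fun m : Sym (Fin n) 3 =>
      (monomial (Multiset.toFinsupp m.1)) (1 : ℝ))) :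
    (fun x => eval x p • ExteriorAlgebra.ιMulti ℝ 3 (⇑(Pi.basisFun ℝ (Fin n)) ∘ s.1))
      ∈ Submodule.span ℝ (Set.range (auxG n)) := by
  induction hp using Submodule.span_induction with
  | mem q hq =>
    obtain ⟨m, rfl⟩ := hq
    exact Submodule.subset_span ⟨(m, s), rfl⟩
  | zero =>
    have h0 : (fun x : Fin n → ℝ => eval x (0 : MvPolynomial (Fin n) ℝ) •
        ExteriorAlgebra.ιMulti ℝ 3 (⇑(Pi.basisFun ℝ (Fin n)) ∘ s.1)) = 0 := by
      funext x; simp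
    rw [h0]; exact Submodule.zero_mem _
  | add q r _ _ hq hr =>
    have : (fun x => eval x (q + r) • ExteriorAlgebra.ιMulti ℝ 3
        (⇑(Pi.basisFun ℝ (Fin n)) ∘ s.1))
        = (fun x => eval x q • ExteriorAlgebra.ιMulti ℝ 3 (⇑(Pi.basisFun ℝ (Fin n)) ∘ s.1))
          + (fun x => eval x r • ExteriorAlgebra.ιMulti ℝ 3 (⇑(Pi.basisFun ℝ (Fin n)) ∘ s.1)) := by
      funext x; simp [add_smul]
    rw [this]
    exact Submodule.add_mem _ hq hr
  | smul a q _ hq =>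
    have : (fun x => eval x (a • q) • ExteriorAlgebra.ιMulti ℝ 3
        (⇑(Pi.basisFun ℝ (Fin n)) ∘ s.1))
        = a • (fun x => eval x q • ExteriorAlgebra.ιMulti ℝ 3 (⇑(Pi.basisFun ℝ (Fin n)) ∘ s.1)) := by
      funext x; simp [smul_eq_C_mul, mul_smul]
    rw [this]
    exact Submodule.smul_mem _ _ hq

open MvPolynomial in
/-- The product polynomial is in the span of degree-3 monomials. -/
lemma aux_prod_poly_mem {n : ℕ} (c : Fin 3 → Fin n → ℝ) :
    (∏ i : Fin 3, ∑ a : Fin n, C (c i a) * X a)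
      ∈ Submodule.span ℝ (Set.range fun m : Sym (Fin n) 3 =>
        (monomial (Multiset.toFinsupp m.1)) (1 : ℝ)) := by
  classical
  rw [Finset.prod_univ_sum]
  apply Submodule.sum_mem
  intro g _
  have key : (∏ i : Fin 3, (C (c i (g i)) * X (g i)))
      = (∏ i : Fin 3, c i (g i)) •
        (monomial (Multiset.toFinsupp ({g 0, g 1, g 2} : Multiset (Fin n)))) (1 : ℝ) := by
    have h : ({g 0, g 1, g 2} : Multiset (Fin n)) = {g 0} + ({g 1} + {g 2}) := by
      rw [Multiset.singleton_add, Multiset.singleton_add]; rfl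
    rw [h, Multiset.toFinsupp_add, Multiset.toFinsupp_add, Multiset.toFinsupp_singleton,
      Multiset.toFinsupp_singleton, Multiset.toFinsupp_singleton,
      monomial_single_add, monomial_single_add]
    have hX : (monomial (Finsupp.single (g 2) 1)) (1 : ℝ) = X (g 2) := rfl
    rw [hX, Fin.prod_univ_three, Fin.prod_univ_three, smul_eq_C_mul, map_mul, map_mul]
    ring
  rw [key]
  exact Submodule.smul_mem _ _ (Submodule.subset_span ⟨⟨({g 0, g 1, g 2} : Multiset (Fin n)),
    rfl⟩, rfl⟩)

open MvPolynomial in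
/-- Key membership lemma: the function `x ↦ (Aᵀx) ∧ (Bᵀx) ∧ (Cᵀx)` lies in the span of
the generators. -/
lemma aux_memQ {n : ℕ} (A B D : Matrix (Fin n) (Fin n) ℝ) :
    (fun x : Fin n → ℝ => ExteriorAlgebra.ιMulti ℝ 3 ![Aᵀ *ᵥ x, Bᵀ *ᵥ x, Dᵀ *ᵥ x])
      ∈ Submodule.span ℝ (Set.range (auxG n)) := by
  classical
  set e : Module.Basis (Fin n) ℝ (Fin n → ℝ) := Pi.basisFun ℝ (Fin n) with he
  set M : Fin 3 → Matrix (Fin n) (Fin n) ℝ := ![A, B, D] with hM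
  have hfun : (fun x : Fin n → ℝ =>
        ExteriorAlgebra.ιMulti ℝ 3 ![Aᵀ *ᵥ x, Bᵀ *ᵥ x, Dᵀ *ᵥ x])
      = ∑ d : Fin 3 → Fin n, (fun x =>
          eval x (∏ i : Fin 3, ∑ a : Fin n, C ((M i) a (d i)) * X a) •
            ExteriorAlgebra.ιMulti ℝ 3 (⇑e ∘ d)) := by
    funext x
    have h1 : ![Aᵀ *ᵥ x, Bᵀ *ᵥ x, Dᵀ *ᵥ x] = fun i => ∑ j, ((M i)ᵀ *ᵥ x) j • e j := by
      funext i
      have h2 : ∀ N : Matrix (Fin n) (Fin n) ℝ, Nᵀ *ᵥ x = ∑ j, (Nᵀ *ᵥ x) j • e j := by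
        intro N
        have := (Pi.basisFun ℝ (Fin n)).sum_repr (Nᵀ *ᵥ x)
        simp only [Pi.basisFun_repr] at this
        rw [← he] at this
        exact this.symm
      fin_cases i
      · exact h2 A
      · exact h2 B
      · exact h2 D
    rw [h1]
    rw [show ((ExteriorAlgebra.ιMulti ℝ (M := Fin n → ℝ) 3) fun i => ∑ j, ((M i)ᵀ *ᵥ x) j • e j)
        = ∑ d : Fin 3 → Fin n, (ExteriorAlgebra.ιMulti ℝ 3) fun i => ((M i)ᵀ *ᵥ x) (d i) • e (d i)
      from (ExteriorAlgebra.ιMulti ℝ 3).toMultilinearMap.map_sum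
        (fun i j => ((M i)ᵀ *ᵥ x) j • e j)]
    simp only [Finset.sum_apply]
    apply Finset.sum_congr rfl
    intro d _
    rw [show ((ExteriorAlgebra.ιMulti ℝ (M := Fin n → ℝ) 3) fun i => ((M i)ᵀ *ᵥ x) (d i) • e (d i))
        = (∏ i, ((M i)ᵀ *ᵥ x) (d i)) • (ExteriorAlgebra.ιMulti ℝ 3) (⇑e ∘ d) from
      (ExteriorAlgebra.ιMulti ℝ 3).toMultilinearMap.map_smul_univ _ _]
    congr 1
    rw [map_prod]
    apply Finset.prod_congr rfl
    intro i _
    rw [map_sum]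
    simp only [map_mul, eval_C, eval_X]
    simp [Matrix.mulVec, dotProduct, Matrix.transpose_apply]
  rw [hfun]
  apply Submodule.sum_mem
  intro d _
  by_cases hd : Function.Injective d
  · obtain ⟨s, σ, rfl⟩ := aux_sort_factor hd
    have hperm : (ExteriorAlgebra.ιMulti ℝ (M := Fin n → ℝ) 3) (⇑e ∘ (s.1 ∘ ⇑σ))
        = ((Equiv.Perm.sign σ : ℤ) : ℝ) • (ExteriorAlgebra.ιMulti ℝ 3) (⇑e ∘ s.1) := by
      have : (⇑e ∘ (s.1 ∘ ⇑σ)) = (⇑e ∘ s.1) ∘ ⇑σ := rfl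
      rw [this, AlternatingMap.map_perm (ExteriorAlgebra.ιMulti ℝ 3) (⇑e ∘ s.1) σ,
        Units.smul_def, Int.cast_smul_eq_zsmul]
    have : (fun x => eval x (∏ i : Fin 3, ∑ a : Fin n, C ((M i) a ((s.1 ∘ ⇑σ) i)) * X a) •
          (ExteriorAlgebra.ιMulti ℝ 3) (⇑e ∘ (s.1 ∘ ⇑σ)))
        = ((Equiv.Perm.sign σ : ℤ) : ℝ) •
          (fun x => eval x (∏ i : Fin 3, ∑ a : Fin n, C ((M i) a ((s.1 ∘ ⇑σ) i)) * X a) •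
            (ExteriorAlgebra.ιMulti ℝ 3) (⇑e ∘ s.1)) := by
      funext x
      rw [hperm]
      simp [smul_smul, mul_comm]
    rw [this]
    exact Submodule.smul_mem _ _ (aux_poly_smul_mem s (aux_prod_poly_mem _))
  · have hz : (ExteriorAlgebra.ιMulti ℝ (M := Fin n → ℝ) 3) (⇑e ∘ d) = 0 := by
      rw [Function.not_injective_iff] at hd
      obtain ⟨i, j, hij, hne⟩ := hd
      exact AlternatingMap.map_eq_zero_of_eq _ _ (by simp [Function.comp, hij]) hne
    have : (fun x => eval x (∏ i : Fin 3, ∑ a : Fin n, C ((M i) a (d i)) * X a) •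
          (ExteriorAlgebra.ιMulti ℝ 3) (⇑e ∘ d))
        = 0 := by
      funext x; rw [hz]; simp
    rw [this]
    exact Submodule.zero_mem _


/-- The linear map `J³ : Λ³(gl(n,ℝ)) → (ℝⁿ → Λ³(ℝⁿ))` determined
by `J³(A ∧ B ∧ C)(x) = (Aᵀx) ∧ (Bᵀx) ∧ (Cᵀx)` has kernel of dimension
`n²(n²−1)(5n²−8)/36`.  Here `Λ³(gl(n,ℝ))` is the third exterior power `⋀[ℝ]^3`
(a submodule of the exterior algebra), and the codomain consists of functions
from `ℝⁿ` to the exterior algebra of `ℝⁿ` (in which `Λ³(ℝⁿ)` sits). -/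
theorem stmt_7 (n : ℕ) (hn : 1 ≤ n)
    (J3 : ⋀[ℝ]^3 (Matrix (Fin n) (Fin n) ℝ) →ₗ[ℝ]
          ((Fin n → ℝ) → ExteriorAlgebra ℝ (Fin n → ℝ)))
    (hJ3 : ∀ (A B C : Matrix (Fin n) (Fin n) ℝ) (x : Fin n → ℝ),
      J3 ⟨ExteriorAlgebra.ιMulti ℝ 3 ![A, B, C],
          ExteriorAlgebra.ιMulti_range ℝ 3 (Set.mem_range_self _)⟩ x
        = ExteriorAlgebra.ιMulti ℝ 3 ![Aᵀ *ᵥ x, Bᵀ *ᵥ x, Cᵀ *ᵥ x]) :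
    Module.finrank ℝ (LinearMap.ker J3)
      = n ^ 2 * (n ^ 2 - 1) * (5 * n ^ 2 - 8) / 36 := by
  classical
  set b : Module.Basis (Fin (n * n)) ℝ (Matrix (Fin n) (Fin n) ℝ) :=
    (Matrix.stdBasis ℝ (Fin n) (Fin n)).reindex finProdFinEquiv with hb
  set F : {s : Fin 3 → Fin (n * n) // StrictMono s} →
      ↥(⋀[ℝ]^3 (Matrix (Fin n) (Fin n) ℝ)) :=
    fun s => ⟨ExteriorAlgebra.ιMulti ℝ 3 (⇑b ∘ s.1),
      ExteriorAlgebra.ιMulti_range ℝ 3 (Set.mem_range_self _)⟩ with hF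
  have hFtop : Submodule.span ℝ (Set.range F) = ⊤ := by
    apply Submodule.map_injective_of_injective
      (Submodule.injective_subtype (⋀[ℝ]^3 (Matrix (Fin n) (Fin n) ℝ)))
    rw [Submodule.map_span, Submodule.map_top, Submodule.range_subtype]
    rw [← Set.range_comp]
    exact aux_span3 b
  haveI hFD : FiniteDimensional ℝ ↥(⋀[ℝ]^3 (Matrix (Fin n) (Fin n) ℝ)) := by
    rw [← aux_span3 b]
    exact FiniteDimensional.span_of_finite ℝ (Set.finite_range _)
  have hrange : LinearMap.range J3 = Submodule.span ℝ (Set.range (auxG n)) := by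
    apply le_antisymm
    · rw [LinearMap.range_eq_map, ← hFtop, Submodule.map_span, Submodule.span_le]
      rintro _ ⟨_, ⟨s, rfl⟩, rfl⟩
      have hb3 : ⇑b ∘ s.1 = ![b (s.1 0), b (s.1 1), b (s.1 2)] := by
        funext i; fin_cases i <;> rfl
      have hFs : J3 (F s) = fun x => ExteriorAlgebra.ιMulti ℝ 3
          ![(b (s.1 0))ᵀ *ᵥ x, (b (s.1 1))ᵀ *ᵥ x, (b (s.1 2))ᵀ *ᵥ x] := by
        funext x
        have hFeq : F s = ⟨ExteriorAlgebra.ιMulti ℝ 3 ![b (s.1 0), b (s.1 1), b (s.1 2)],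
            ExteriorAlgebra.ιMulti_range ℝ 3 (Set.mem_range_self _)⟩ :=
          Subtype.ext (by rw [hF]; simp only; rw [hb3])
        rw [hFeq]
        exact hJ3 _ _ _ x
      rw [hFs]
      exact aux_memQ _ _ _
    · rw [Submodule.span_le]
      rintro _ ⟨⟨m, s⟩, rfl⟩
      obtain ⟨a₁, a₂, a₃, hm⟩ := Multiset.card_eq_three.mp m.2
      refine ⟨⟨ExteriorAlgebra.ιMulti ℝ 3 ![Matrix.single a₁ (s.1 0) 1,
          Matrix.single a₂ (s.1 1) 1, Matrix.single a₃ (s.1 2) 1],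
          ExteriorAlgebra.ιMulti_range ℝ 3 (Set.mem_range_self _)⟩, ?_⟩
      funext x
      rw [hJ3]
      show _ = auxG n (m, s) x
      rw [aux_stdBasisMatrix_mulVec, aux_stdBasisMatrix_mulVec, aux_stdBasisMatrix_mulVec]
      have h3 : ![x a₁ • (Pi.basisFun ℝ (Fin n)) (s.1 0), x a₂ • (Pi.basisFun ℝ (Fin n)) (s.1 1),
            x a₃ • (Pi.basisFun ℝ (Fin n)) (s.1 2)]
          = fun i => (![x a₁, x a₂, x a₃] i) • ((⇑(Pi.basisFun ℝ (Fin n)) ∘ s.1) i) := by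
        funext i; fin_cases i <;> rfl
      rw [h3]
      rw [show ((ExteriorAlgebra.ιMulti ℝ (M := Fin n → ℝ) 3)
            fun i => (![x a₁, x a₂, x a₃] i) • ((⇑(Pi.basisFun ℝ (Fin n)) ∘ s.1) i))
          = (∏ i, ![x a₁, x a₂, x a₃] i) •
            (ExteriorAlgebra.ιMulti ℝ 3) (⇑(Pi.basisFun ℝ (Fin n)) ∘ s.1) from
        (ExteriorAlgebra.ιMulti ℝ 3).toMultilinearMap.map_smul_univ _ _]
      show _ = MvPolynomial.eval x ((MvPolynomial.monomial (Multiset.toFinsupp m.1)) (1 : ℝ)) • _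
      rw [hm, aux_eval_monomial, Fin.prod_univ_three]
      simp
  have hrankr : Module.finrank ℝ ↥(LinearMap.range J3) = (n + 2).choose 3 * n.choose 3 := by
    rw [hrange, finrank_span_eq_card (auxG_indep n)]
    rw [Fintype.card_prod, Sym.card_sym_eq_choose, aux_card_strictMono, Fintype.card_fin]
    congr 2
  have hrankd : Module.finrank ℝ ↥(⋀[ℝ]^3 (Matrix (Fin n) (Fin n) ℝ)) = (n * n).choose 3 := by
    rw [← aux_span3 b, finrank_span_eq_card (aux_indep3 b), aux_card_strictMono]
  have hrn := LinearMap.finrank_range_add_finrank_ker J3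
  rw [hrankr, hrankd] at hrn
  exact aux_arith n hn _ (by omega)
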